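/- Let g be a finite-dimensional complex Lie algebra, x, a ∈ g*, and let h = g_y be the stabilizer of y = x − λ₀ a for some λ₀ ∈ ℂ. Suppose λ: U → ℂ is an analytic function on a neighborhood U of x with λ(x) = λ₀, such that g_{z − λ(z)a} has constant dimension on U and there exist analytic maps ξ, η: U → g with ξ(z), η(z) ∈ g_{z − λ(z)a} for all z ∈ U. Then for ξ₀ = ξ(x), η₀ = η(x) ∈ h, one has [ξ₀, η₀] = ⟨a, [ξ₀, η₀]⟩ · dλ(x), where dλ(x) ∈ g is the differential of λ at x viewed as an element of g ≅ (g*)*. -/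

import Mathlib

open Module

/-- The coadjoint stabilizer `g_y = {ξ ∈ g ∣ ⟨y, [ξ, ·]⟩ = 0}` of `y ∈ g*`, as a
submodule of `g`. The Lie algebra structure on the normed space `g` is given by the
bilinear bracket `B`, and the dual `g*` is realised as the continuous dual
`g →L[ℂ] ℂ` (which coincides with the algebraic dual, `g` being finite-dimensional). -/
def stabSubmodule {g : Type*} [NormedAddCommGroup g] [NormedSpace ℂ g]
    (B : g →ₗ[ℂ] g →ₗ[ℂ] g) (y : g →L[ℂ] ℂ) : Submodule ℂ g where
  carrier := {ξ | ∀ w : g, y (B ξ w) = 0}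
  add_mem' := by
    intro a b ha hb w
    have ha' : ∀ w : g, y (B a w) = 0 := ha
    have hb' : ∀ w : g, y (B b w) = 0 := hb
    simp [ha' w, hb' w]
  zero_mem' := by intro w; simp
  smul_mem' := by
    intro t a ha w
    have ha' : ∀ w : g, y (B a w) = 0 := ha
    simp [ha' w]

/-- If `λ` is analytic near `x` with `λ(x) = λ₀`, the stabilizers `g_{z - λ(z)a}` have
constant dimension near `x`, and `ξ, η` are analytic local sections of these
stabilizers, then `[ξ₀, η₀] = ⟨a, [ξ₀, η₀]⟩ · dλ(x)` for `ξ₀ = ξ(x)`, `η₀ = η(x)`,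
where `dλ(x)` is the differential of `λ` at `x`, viewed as an element of `g ≅ (g*)*`. -/
theorem stmt18 {g : Type*} [NormedAddCommGroup g] [NormedSpace ℂ g]
    [FiniteDimensional ℂ g]
    (B : g →ₗ[ℂ] g →ₗ[ℂ] g)
    (hBskew : ∀ v, B v v = 0)
    (hBjac : ∀ u v w, B u (B v w) = B (B u v) w + B v (B u w))
    (x a : g →L[ℂ] ℂ) (l0 : ℂ) (lam : (g →L[ℂ] ℂ) → ℂ)
    (hl0 : lam x = l0) (hlam : AnalyticAt ℂ lam x)
    (hdim : ∀ᶠ z in nhds x,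
      finrank ℂ ↥(stabSubmodule B (z - lam z • a)) =
        finrank ℂ ↥(stabSubmodule B (x - l0 • a)))
    (ξ η : (g →L[ℂ] ℂ) → g)
    (hξan : AnalyticAt ℂ ξ x) (hηan : AnalyticAt ℂ η x)
    (hξ : ∀ᶠ z in nhds x, ξ z ∈ stabSubmodule B (z - lam z • a))
    (hη : ∀ᶠ z in nhds x, η z ∈ stabSubmodule B (z - lam z • a)) :
    ∀ Dl : g, (∀ v : g →L[ℂ] ℂ, fderiv ℂ lam x v = v Dl) →
      B (ξ x) (η x) = (a (B (ξ x) (η x))) • Dl := by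
  intro Dl hDl
  classical
  -- skew symmetry
  have hskew : ∀ u v, B u v = - B v u := by
    intro u v
    have h := hBskew (u + v)
    simp only [map_add, LinearMap.add_apply, hBskew, zero_add, add_zero] at h
    exact eq_neg_of_add_eq_zero_right h
  -- continuous version of B
  let B1 : g →ₗ[ℂ] (g →L[ℂ] g) :=
    (LinearMap.toContinuousLinearMap :
      (g →ₗ[ℂ] g) ≃ₗ[ℂ] (g →L[ℂ] g)).toLinearMap.comp B
  let Bc : g →L[ℂ] g →L[ℂ] g := LinearMap.toContinuousLinearMap B1
  have hBc : ∀ u v, Bc u v = B u v := fun u v => rfl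
  set y : g →L[ℂ] ℂ := x - l0 • a with hy
  have hξx : ∀ w : g, y (B (ξ x) w) = 0 := by
    have h := hξ.self_of_nhds
    rw [hl0] at h
    exact h
  have hηx : ∀ w : g, y (B (η x) w) = 0 := by
    have h := hη.self_of_nhds
    rw [hl0] at h
    exact h
  have hyl : ∀ u : g, y (B u (η x)) = 0 := by
    intro u
    rw [hskew u (η x), map_neg, hηx u, neg_zero]
  -- the function vanishing near x
  set φ : (g →L[ℂ] ℂ) → (g →L[ℂ] ℂ) := fun z => z - lam z • a with hφ
  set w : (g →L[ℂ] ℂ) → g := fun z => Bc (ξ z) (η z) with hw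
  have hfz : (fun z => (φ z) (w z)) =ᶠ[nhds x] (fun _ => (0 : ℂ)) := by
    filter_upwards [hξ] with z hz
    exact hz (η z)
  have hlamd : DifferentiableAt ℂ lam x := hlam.differentiableAt
  have hξd : DifferentiableAt ℂ ξ x := hξan.differentiableAt
  have hηd : DifferentiableAt ℂ η x := hηan.differentiableAt
  have hφd : DifferentiableAt ℂ φ x := differentiableAt_fun_id.sub (hlamd.smul_const a)
  have hcd : DifferentiableAt ℂ (fun z => Bc (ξ z)) x :=
    Bc.differentiableAt.comp x hξd
  have hwd : DifferentiableAt ℂ w x := hcd.clm_apply hηd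
  have hf0 : fderiv ℂ (fun z => (φ z) (w z)) x = 0 :=
    hfz.fderiv_eq.trans (fderiv_const_apply 0)
  have hfd : fderiv ℂ (fun z => (φ z) (w z)) x
      = (φ x).comp (fderiv ℂ w x) + (fderiv ℂ φ x).flip (w x) :=
    fderiv_clm_apply hφd hwd
  have hφ' : fderiv ℂ φ x
      = ContinuousLinearMap.id ℂ (g →L[ℂ] ℂ) - (fderiv ℂ lam x).smulRight a := by
    rw [hφ]
    rw [fderiv_fun_sub differentiableAt_fun_id (hlamd.smul_const a), fderiv_id',
      fderiv_smul_const hlamd a]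
  have hc' : fderiv ℂ (fun z => Bc (ξ z)) x = Bc.comp (fderiv ℂ ξ x) := by
    change fderiv ℂ (Bc ∘ ξ) x = _
    rw [fderiv_comp x Bc.differentiableAt hξd, Bc.fderiv]
  have hw' : fderiv ℂ w x
      = (Bc (ξ x)).comp (fderiv ℂ η x) + (Bc.comp (fderiv ℂ ξ x)).flip (η x) := by
    rw [hw]
    rw [fderiv_clm_apply hcd hηd, hc']
  have hφx : φ x = y := by
    rw [hy]
    show x - lam x • a = x - l0 • a
    rw [hl0]
  have key : ∀ v : g →L[ℂ] ℂ, v (w x) = (v Dl) * a (w x) := by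
    intro v
    have h := congrArg (fun L : (g →L[ℂ] ℂ) →L[ℂ] ℂ => L v) (hf0 ▸ hfd)
    simp only [ContinuousLinearMap.add_apply, ContinuousLinearMap.comp_apply,
      ContinuousLinearMap.flip_apply, ContinuousLinearMap.zero_apply,
      hφ', hw', hφx, ContinuousLinearMap.sub_apply, ContinuousLinearMap.id_apply,
      ContinuousLinearMap.smulRight_apply, map_add] at h
    have h1 : y (Bc (ξ x) (fderiv ℂ η x v)) = 0 := by
      rw [hBc]; exact hξx _
    have h2 : y (Bc (fderiv ℂ ξ x v) (η x)) = 0 := by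
      rw [hBc]; exact hyl _
    rw [h1, h2, hDl v] at h
    simp only [zero_add, ContinuousLinearMap.smul_apply, smul_eq_mul] at h
    linear_combination -h
  have hwx : w x = B (ξ x) (η x) := hBc _ _
  by_contra hne
  obtain ⟨v, hv⟩ := SeparatingDual.exists_ne_zero (R := ℂ) (sub_ne_zero.mpr hne)
  apply hv
  have k := key v
  rw [hwx] at k
  rw [map_sub, map_smul, k, smul_eq_mul]
  ring
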